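/- Let X be a resolving subcategory of K^{[-1,0]}(proj Λ). Then β(X) = { X ∈ X : for every conflation X ↣ X' ↠ X'' with X' ∈ X, X'' ∈ X } is closed under extensions: if X ↣ Y ↠ Z is a conflation with X, Z ∈ β(X), then Y ∈ β(X). -/

import Mathlib

/-! **Statement 9.**  `K^{[-1,0]}(proj Λ)` is realized concretely as the full subcategory of
the homotopy category of cochain complexes of `Λ`-modules consisting of objects isomorphic to
complexes of finitely generated projective modules concentrated in degrees `-1, 0`; its
conflations are the distinguished triangles all of whose terms lie in this subcategory. -/

open CategoryTheory Limits Pretriangulated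

namespace Stmt9

universe u
variable (Λ : Type u) [Ring Λ]

/-- The homotopy category of cochain complexes of `Λ`-modules. -/
abbrev HtpyCat := HomotopyCategory (ModuleCat.{u} Λ) (ComplexShape.up ℤ)

/-- The subcategory `K^{[-1,0]}(proj Λ)`. -/
def KLam : Set (HtpyCat Λ) :=
  {X | ∃ C : CochainComplex (ModuleCat.{u} Λ) ℤ,
    (∀ i : ℤ, i ≠ -1 → i ≠ 0 → IsZero (C.X i)) ∧
    Module.Projective Λ (C.X (-1)) ∧ Module.Projective Λ (C.X 0) ∧
    Module.Finite Λ (C.X (-1)) ∧ Module.Finite Λ (C.X 0) ∧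
    Nonempty (X ≅ (HomotopyCategory.quotient _ _).obj C)}

/-- Conflations of `K^{[-1,0]}(proj Λ)`. -/
def IsConflation {X Y Z : HtpyCat Λ} (f : X ⟶ Y) (g : Y ⟶ Z) : Prop :=
  X ∈ KLam Λ ∧ Y ∈ KLam Λ ∧ Z ∈ KLam Λ ∧
    ∃ h : Z ⟶ X⟦(1 : ℤ)⟧, Triangle.mk f g h ∈ distTriang (HtpyCat Λ)

/-- `Z` is a direct sum of `A` and `B`. -/
def IsBiprodDecomp (Z A B : HtpyCat Λ) : Prop :=
  ∃ (iA : A ⟶ Z) (iB : B ⟶ Z) (pA : Z ⟶ A) (pB : Z ⟶ B),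
    iA ≫ pA = 𝟙 A ∧ iB ≫ pB = 𝟙 B ∧ iA ≫ pB = 0 ∧ iB ≫ pA = 0 ∧
      pA ≫ iA + pB ≫ iB = 𝟙 Z

/-- `X` is a resolving subcategory of `K^{[-1,0]}(proj Λ)`: it is closed under extensions,
cocones and direct summands, and every object of `K` is the cone of a conflation with middle
term in `X` (equivalently, `X` contains all projective objects). -/
def Resolving (X : Set (HtpyCat Λ)) : Prop :=
  X ⊆ KLam Λ ∧
  (∀ Z ∈ KLam Λ, ∃ (A B : HtpyCat Λ) (f : A ⟶ B) (g : B ⟶ Z),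
    A ∈ KLam Λ ∧ B ∈ X ∧ IsConflation Λ f g) ∧
  (∀ ⦃A B C : HtpyCat Λ⦄ (f : A ⟶ B) (g : B ⟶ C),
    IsConflation Λ f g → A ∈ X → C ∈ X → B ∈ X) ∧
  (∀ ⦃A B C : HtpyCat Λ⦄ (f : A ⟶ B) (g : B ⟶ C),
    IsConflation Λ f g → B ∈ X → C ∈ X → A ∈ X) ∧
  (∀ Z A B : HtpyCat Λ, IsBiprodDecomp Λ Z A B → Z ∈ X → A ∈ X)

/-- `β(X) = { X ∈ X : every conflation X ↣ X' ↠ X'' with X' ∈ X has X'' ∈ X }`. -/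
def beta (X : Set (HtpyCat Λ)) : Set (HtpyCat Λ) :=
  {A | A ∈ X ∧ ∀ ⦃B C : HtpyCat Λ⦄ (f : A ⟶ B) (g : B ⟶ C),
    IsConflation Λ f g → B ∈ X → C ∈ X}

lemma isZero_biprod {C : Type*} [Category C] [HasZeroMorphisms C] {A B : C}
    [HasBinaryBiproduct A B] (hA : IsZero A) (hB : IsZero B) : IsZero (A ⊞ B) := by
  rw [IsZero.iff_id_eq_zero]
  apply biprod.hom_ext
  · rw [hA.eq_of_tgt (𝟙 _ ≫ biprod.fst) 0, hA.eq_of_tgt ((0 : A ⊞ B ⟶ A ⊞ B) ≫ biprod.fst) 0]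
  · rw [hB.eq_of_tgt (𝟙 _ ≫ biprod.snd) 0, hB.eq_of_tgt ((0 : A ⊞ B ⟶ A ⊞ B) ≫ biprod.snd) 0]

lemma klam_ext {X' D Z' : HtpyCat Λ} (hX' : X' ∈ KLam Λ) (hZ' : Z' ∈ KLam Λ)
    {f : X' ⟶ D} {g : D ⟶ Z'} {h : Z' ⟶ X'⟦(1:ℤ)⟧}
    (hT : Triangle.mk f g h ∈ distTriang (HtpyCat Λ)) : D ∈ KLam Λ := by
  obtain ⟨C1, hz1, hp1, hp1', hf1, hf1', ⟨e1⟩⟩ := hX'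
  obtain ⟨C2, hz2, hp2, hp2', hf2, hf2', ⟨e2⟩⟩ := hZ'
  set Q := HomotopyCategory.quotient (ModuleCat.{u} Λ) (ComplexShape.up ℤ) with hQ
  have hT' := inv_rot_of_distTriang _ hT
  set T' := (Triangle.mk f g h).invRotate with hT'def
  let a : Q.obj ((CategoryTheory.shiftFunctor _ (-1:ℤ)).obj C2) ≅ T'.obj₁ :=
    (Q.commShiftIso (-1:ℤ)).app C2 ≪≫
      (CategoryTheory.shiftFunctor (HtpyCat Λ) (-1:ℤ)).mapIso e2.symm
  obtain ⟨ψ, hψ⟩ := Q.map_surjective (a.hom ≫ T'.mor₁ ≫ e1.hom)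
  have hdist := HomotopyCategory.mappingCone_triangleh_distinguished ψ
  have comm : (CochainComplex.mappingCone.triangleh ψ).mor₁ ≫ e1.symm.hom
      = a.hom ≫ T'.mor₁ := by
    show Q.map ψ ≫ e1.inv = _
    rw [hψ]
    exact (Category.assoc _ _ _).trans (congrArg (a.hom ≫ ·) ((Category.assoc _ _ _).trans
      ((congrArg (T'.mor₁ ≫ ·) e1.hom_inv_id).trans (Category.comp_id _))))
  let it := isoTriangleOfIso₁₂ _ _ hdist hT' a e1.symm comm
  let eD : D ≅ Q.obj (CochainComplex.mappingCone ψ) := (Triangle.π₃.mapIso it).symm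
  have key : ∀ i : ℤ, (CochainComplex.mappingCone ψ).X i ≅ C2.X i ⊞ C1.X i := fun i =>
    HomologicalComplex.homotopyCofiber.XIsoBiprod ψ i (i+1) (by simp) ≪≫
      biprod.mapIso (C2.shiftFunctorObjXIso (-1) (i+1) i (by omega)) (Iso.refl _)
  refine ⟨CochainComplex.mappingCone ψ, ?_, ?_, ?_, ?_, ?_, ⟨eD⟩⟩
  · intro i hi hi0
    exact (isZero_biprod (hz2 i hi hi0) (hz1 i hi hi0)).of_iso (key i)
  · haveI := hp2; haveI := hp1
    exact Module.Projective.of_equiv (M := Prod ↑(C2.X (-1)) ↑(C1.X (-1)))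
      ((ModuleCat.biprodIsoProd _ _).symm ≪≫ (key (-1)).symm).toLinearEquiv
  · haveI := hp2'; haveI := hp1'
    exact Module.Projective.of_equiv (M := Prod ↑(C2.X 0) ↑(C1.X 0))
      ((ModuleCat.biprodIsoProd _ _).symm ≪≫ (key 0).symm).toLinearEquiv
  · haveI := hf2; haveI := hf1
    exact Module.Finite.equiv (M := Prod ↑(C2.X (-1)) ↑(C1.X (-1)))
      ((ModuleCat.biprodIsoProd _ _).symm ≪≫ (key (-1)).symm).toLinearEquiv
  · haveI := hf2'; haveI := hf1'
    exact Module.Finite.equiv (M := Prod ↑(C2.X 0) ↑(C1.X 0))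
      ((ModuleCat.biprodIsoProd _ _).symm ≪≫ (key 0).symm).toLinearEquiv

/-- If `X` is a resolving subcategory of `K^{[-1,0]}(proj Λ)`, then
`β(X)` is closed under extensions: if `A ↣ B ↠ C` is a conflation with `A, C ∈ β(X)`,
then `B ∈ β(X)`. -/
theorem stmt9 (X : Set (HtpyCat Λ)) (hX : Resolving Λ X) :
    ∀ ⦃A B C : HtpyCat Λ⦄ (f : A ⟶ B) (g : B ⟶ C), IsConflation Λ f g →
      A ∈ beta Λ X → C ∈ beta Λ X → B ∈ beta Λ X := by
  rintro A B C f g hconf ⟨hA, hAb⟩ ⟨hC, hCb⟩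
  obtain ⟨hAK, hBK, hCK, h, hT⟩ := hconf
  have hB : B ∈ X := hX.2.2.1 f g ⟨hAK, hBK, hCK, h, hT⟩ hA hC
  refine ⟨hB, ?_⟩
  intro B' B'' u v hconf'
  intro hB'
  obtain ⟨_, hB'K, hB''K, w, hT'⟩ := hconf'
  obtain ⟨D, v', w', hT''⟩ := Pretriangulated.distinguished_cocone_triangle (f ≫ u)
  have oct := Triangulated.someOctahedron (u₁₂ := f) (u₂₃ := u) (u₁₃ := f ≫ u)
    rfl hT hT' hT''
  have hDK : D ∈ KLam Λ := klam_ext Λ (hX.1 hC) hB''K oct.mem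
  have hD : D ∈ X := hAb (f ≫ u) v' ⟨hAK, hB'K, hDK, w', hT''⟩ hB'
  exact hCb oct.m₁ oct.m₃ ⟨hX.1 hC, hDK, hB''K, _, oct.mem⟩ hD

end Stmt9
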